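/- arXiv:1702.06518 — 2 statements merged into one kernel-verified Lean document; each statement's English description precedes it below -/
import Mathlib

section
/- For real numbers $d_1, d_2$ with $d_1 d_2 < 0$, the integral $\int_{-\pi/2}^{\pi/2} |d_1 \cos^2\varphi + d_2 \sin^2\varphi|\, d\varphi$ equals $2\sqrt{-d_1 d_2} + 2|d_1 + d_2| \cdot \left|\arctan\sqrt{-d_1/d_2} - \frac{\pi}{4}\right|$. -/
open Real intervalIntegral

lemma intg_aux (d1 d2 : ℝ) (u v : ℝ) :
    ∫ φ in u..v, (d1 * Real.cos φ ^ 2 + d2 * Real.sin φ ^ 2)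
      = ((d1+d2)/2 * v + (d1-d2)/2 * (Real.sin v * Real.cos v))
        - ((d1+d2)/2 * u + (d1-d2)/2 * (Real.sin u * Real.cos u)) := by
  apply intervalIntegral.integral_eq_sub_of_hasDerivAt
  · intro x _
    have h1 : HasDerivAt (fun φ : ℝ => Real.sin φ * Real.cos φ)
        (Real.cos x * Real.cos x + Real.sin x * (-Real.sin x)) x :=
      (Real.hasDerivAt_sin x).mul (Real.hasDerivAt_cos x)
    have h2 : HasDerivAt (fun φ : ℝ => (d1+d2)/2 * φ + (d1-d2)/2 * (Real.sin φ * Real.cos φ))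
        ((d1+d2)/2 * 1 + (d1-d2)/2 * (Real.cos x * Real.cos x + Real.sin x * (-Real.sin x))) x :=
      ((hasDerivAt_id x).const_mul _).add (h1.const_mul _)
    convert h2 using 1
    · rfl
    · rfl
    have hx := Real.sin_sq_add_cos_sq x
    linear_combination ((d1+d2)/2) * hx
  · apply Continuous.intervalIntegrable
    continuity

set_option maxHeartbeats 1000000 in
lemma main_aux (d1 d2 : ℝ) (h1 : 0 < d1) (h2 : d2 < 0) :
    ∫ φ in (-(π/2))..(π/2), |d1 * Real.cos φ ^ 2 + d2 * Real.sin φ ^ 2|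
      = 2 * Real.sqrt (-(d1 * d2)) +
        2 * |d1 + d2| * |Real.arctan (Real.sqrt (-(d1 / d2))) - π / 4| := by
  have hd2 : d2 ≠ 0 := ne_of_lt h2
  set t := Real.sqrt (-(d1/d2)) with ht
  set φ0 := Real.arctan t with hφ0
  have hratio : (0:ℝ) ≤ -(d1/d2) := by
    rw [neg_nonneg]
    exact div_nonpos_of_nonneg_of_nonpos h1.le h2.le
  have htnn : 0 ≤ t := Real.sqrt_nonneg _
  have ht2 : t ^ 2 = -(d1/d2) := Real.sq_sqrt hratio
  have hφ0nn : 0 ≤ φ0 := by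
    rw [hφ0, ← Real.arctan_zero]; exact Real.arctan_strictMono.monotone htnn
  have hφ0lt : φ0 < π/2 := Real.arctan_lt_pi_div_two t
  set S := Real.sin φ0 with hS
  set C := Real.cos φ0 with hC
  have hCpos : 0 < C := Real.cos_arctan_pos t
  have hStC : S = t * C := by
    rw [hS, hC, hφ0, Real.sin_arctan, Real.cos_arctan]; ring
  have hSnn : 0 ≤ S := by rw [hStC]; positivity
  have hpyth : S ^ 2 + C ^ 2 = 1 := Real.sin_sq_add_cos_sq φ0
  have hd2t2 : d2 * t ^ 2 = -d1 := by rw [ht2]; field_simp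
  have key1 : d1 * C ^ 2 + d2 * S ^ 2 = 0 := by
    rw [hStC]; nlinarith [hd2t2]
  have key2 : (d1 - d2) * (S * C) = Real.sqrt (-(d1 * d2)) := by
    have hC2 : C ^ 2 = 1 / (1 + t ^ 2) := by rw [hC, hφ0]; exact Real.cos_sq_arctan t
    have h1t : 1 + t ^ 2 = (d2 - d1)/d2 := by rw [ht2]; field_simp; ring
    have hd21 : d2 - d1 ≠ 0 := by linarith
    have hSC : (d1 - d2) * (S * C) = t * (-d2) := by
      rw [hStC]
      have : C * C = C ^ 2 := by ring
      rw [show t * C * C = t * (C * C) by ring, this, hC2, h1t]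
      field_simp
      ring
    rw [hSC, ht, show -d2 = Real.sqrt ((-d2) ^ 2) from (Real.sqrt_sq (by linarith)).symm,
      ← Real.sqrt_mul hratio]
    congr 1
    field_simp
  -- sign lemmas
  have gval : ∀ φ : ℝ, d1 * Real.cos φ ^ 2 + d2 * Real.sin φ ^ 2
      = d1 + (d2 - d1) * Real.sin φ ^ 2 := by
    intro φ
    have := Real.sin_sq_add_cos_sq φ
    nlinarith [this]
  have mid : ∀ φ ∈ Set.uIcc (-φ0) φ0,
      |d1 * Real.cos φ ^ 2 + d2 * Real.sin φ ^ 2| = d1 * Real.cos φ ^ 2 + d2 * Real.sin φ ^ 2 := by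
    intro φ hφ
    rw [Set.uIcc_of_le (by linarith)] at hφ
    obtain ⟨hl, hr⟩ := hφ
    have hs1 : Real.sin φ ≤ S :=
      Real.sin_le_sin_of_le_of_le_pi_div_two (by linarith) hφ0lt.le hr
    have hs2 : -S ≤ Real.sin φ := by
      have := Real.sin_le_sin_of_le_of_le_pi_div_two (x := -φ0) (y := φ)
        (by linarith) (by linarith) hl
      rwa [Real.sin_neg] at this
    have hsq : Real.sin φ ^ 2 ≤ S ^ 2 := by nlinarith
    apply abs_of_nonneg
    rw [gval]
    nlinarith [key1, hpyth]
  have right : ∀ φ ∈ Set.uIcc φ0 (π/2),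
      |d1 * Real.cos φ ^ 2 + d2 * Real.sin φ ^ 2| = -(d1 * Real.cos φ ^ 2 + d2 * Real.sin φ ^ 2) := by
    intro φ hφ
    rw [Set.uIcc_of_le hφ0lt.le] at hφ
    obtain ⟨hl, hr⟩ := hφ
    have hs1 : S ≤ Real.sin φ :=
      Real.sin_le_sin_of_le_of_le_pi_div_two (by linarith) hr hl
    have hsq : S ^ 2 ≤ Real.sin φ ^ 2 := by nlinarith
    apply abs_of_nonpos
    rw [gval]
    nlinarith [key1, hpyth]
  have left : ∀ φ ∈ Set.uIcc (-(π/2)) (-φ0),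
      |d1 * Real.cos φ ^ 2 + d2 * Real.sin φ ^ 2| = -(d1 * Real.cos φ ^ 2 + d2 * Real.sin φ ^ 2) := by
    intro φ hφ
    rw [Set.uIcc_of_le (by linarith)] at hφ
    obtain ⟨hl, hr⟩ := hφ
    have hs1 : Real.sin φ ≤ -S := by
      have := Real.sin_le_sin_of_le_of_le_pi_div_two (x := φ) (y := -φ0)
        hl (by linarith) hr
      rwa [Real.sin_neg] at this
    have hsq : S ^ 2 ≤ Real.sin φ ^ 2 := by nlinarith
    apply abs_of_nonpos
    rw [gval]
    nlinarith [key1, hpyth]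
  -- split the integral
  have hii : ∀ u v : ℝ, IntervalIntegrable
      (fun φ => |d1 * Real.cos φ ^ 2 + d2 * Real.sin φ ^ 2|) MeasureTheory.volume u v := by
    intro u v
    apply Continuous.intervalIntegrable
    apply Continuous.abs
    continuity
  have split : (∫ φ in (-(π/2))..(π/2), |d1 * Real.cos φ ^ 2 + d2 * Real.sin φ ^ 2|)
      = (∫ φ in (-(π/2))..(-φ0), |d1 * Real.cos φ ^ 2 + d2 * Real.sin φ ^ 2|)
      + (∫ φ in (-φ0)..φ0, |d1 * Real.cos φ ^ 2 + d2 * Real.sin φ ^ 2|)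
      + (∫ φ in φ0..(π/2), |d1 * Real.cos φ ^ 2 + d2 * Real.sin φ ^ 2|) := by
    rw [intervalIntegral.integral_add_adjacent_intervals (hii _ _) (hii _ _),
      intervalIntegral.integral_add_adjacent_intervals (hii _ _) (hii _ _)]
  rw [split,
    intervalIntegral.integral_congr left, intervalIntegral.integral_congr mid,
    intervalIntegral.integral_congr right,
    intervalIntegral.integral_neg, intervalIntegral.integral_neg,
    intg_aux, intg_aux, intg_aux]
  rw [Real.sin_pi_div_two, Real.cos_pi_div_two, Real.sin_neg, Real.cos_neg,
    Real.sin_neg, Real.cos_neg, Real.sin_pi_div_two, Real.cos_pi_div_two]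
  -- now an algebraic identity
  have lhs_eq : -(((d1+d2)/2 * (-φ0) + (d1-d2)/2 * (-S * C))
        - ((d1+d2)/2 * (-(π/2)) + (d1-d2)/2 * (-1 * 0)))
      + ((d1+d2)/2 * φ0 + (d1-d2)/2 * (S * C)
        - ((d1+d2)/2 * (-φ0) + (d1-d2)/2 * (-S * C)))
      + -(((d1+d2)/2 * (π/2) + (d1-d2)/2 * (1 * 0))
        - ((d1+d2)/2 * φ0 + (d1-d2)/2 * (S * C)))
      = 2 * ((d1-d2) * (S*C)) + (d1+d2) * (2*φ0 - π/2) := by ring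
  rw [lhs_eq, key2]
  -- final case analysis on sign of d1 + d2
  rcases le_or_gt 0 (d1 + d2) with hsum | hsum
  · have ht1 : 1 ≤ t := by
      rw [ht, Real.one_le_sqrt, le_neg, div_le_iff_of_neg h2]
      linarith
    have hφ14 : π/4 ≤ φ0 := by
      rw [hφ0, ← Real.arctan_one]
      exact Real.arctan_strictMono.monotone ht1
    rw [abs_of_nonneg hsum, abs_of_nonneg (by linarith : (0:ℝ) ≤ φ0 - π/4)]
    ring
  · have ht1 : t ≤ 1 := by
      rw [ht, show (1:ℝ) = Real.sqrt 1 from Real.sqrt_one.symm]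
      apply Real.sqrt_le_sqrt
      rw [neg_le, le_div_iff_of_neg h2]
      linarith
    have hφ14 : φ0 ≤ π/4 := by
      rw [hφ0, ← Real.arctan_one]
      exact Real.arctan_strictMono.monotone ht1
    rw [abs_of_nonpos (by linarith : d1 + d2 ≤ 0), abs_of_nonpos (by linarith : φ0 - π/4 ≤ 0)]
    ring

theorem stmt_1 (d1 d2 : ℝ) (h : d1 * d2 < 0) :
    ∫ φ in (-(π/2))..(π/2), |d1 * Real.cos φ ^ 2 + d2 * Real.sin φ ^ 2|
      = 2 * Real.sqrt (-(d1 * d2)) +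
        2 * |d1 + d2| * |Real.arctan (Real.sqrt (-(d1 / d2))) - π / 4| := by
  rcases lt_or_gt_of_ne (fun h0 : d1 = 0 => by simp [h0] at h) with hd1 | hd1
  · -- d1 < 0, hence d2 > 0; apply main_aux to (-d1, -d2)
    have hd2 : 0 < d2 := by nlinarith
    have := main_aux (-d1) (-d2) (by linarith) (by linarith)
    have heq : (∫ φ in (-(π/2))..(π/2), |d1 * Real.cos φ ^ 2 + d2 * Real.sin φ ^ 2|)
        = ∫ φ in (-(π/2))..(π/2), |(-d1) * Real.cos φ ^ 2 + (-d2) * Real.sin φ ^ 2| := by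
      apply intervalIntegral.integral_congr
      intro φ _
      simp only
      rw [show -d1 * Real.cos φ ^ 2 + -d2 * Real.sin φ ^ 2
        = -(d1 * Real.cos φ ^ 2 + d2 * Real.sin φ ^ 2) by ring, abs_neg]
    rw [heq, this,
      show -(-d1 * -d2) = -(d1 * d2) by ring,
      show -(-d1 / -d2) = -(d1 / d2) by ring,
      show -d1 + -d2 = -(d1 + d2) by ring, abs_neg]
  · have hd2 : d2 < 0 := by nlinarith
    exact main_aux d1 d2 hd1 hd2
end

section
/- Let $B$ be a symmetric positive definite bilinear form on $\mathbb{R}^{n-1}$ with eigenvalues $d_1, \dots, d_{n-1}$, let $D = \mathrm{diag}(d_1,\dots,d_{n-1})$, and let $E$ be the $(n-1)\times k$ matrix whose columns are the first $k$ standard basis vectors. Then the average over the orthogonal group $O(n-1)$ (with normalized Haar measure) of $\det(E^t g^t D g E)$ equals $\binom{n-1}{k}^{-1} s_k(d_1, \dots, d_{n-1})$, where $s_k$ is the $k$-th elementary symmetric polynomial. -/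
open Matrix MeasureTheory Finset

/-- The Borel σ-algebra on the orthogonal group `O(m)` (as a subspace of matrices). -/
noncomputable instance orthogonalGroupMeasurableSpace (m : ℕ) :
    MeasurableSpace (Matrix.orthogonalGroup (Fin m) ℝ) := borel _

instance orthogonalGroupBorelSpace (m : ℕ) :
    BorelSpace (Matrix.orthogonalGroup (Fin m) ℝ) := ⟨rfl⟩

lemma det_eq_sum_funcs {m k : ℕ} (A : Matrix (Fin m) (Fin k) ℝ) (d : Fin m → ℝ) :
    (Aᵀ * Matrix.diagonal d * A).det
      = ∑ r : Fin k → Fin m, (∏ a, (d (r a) * A (r a) a)) * (A.submatrix r id).det := by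
  have hM : (Aᵀ * Matrix.diagonal d * A)
      = Matrix.of (fun a => ∑ i : Fin m, (d i * A i a) • (fun b : Fin k => A i b)) := by
    rw [Matrix.mul_assoc]
    ext a b
    rw [Matrix.mul_apply]
    simp only [Matrix.diagonal_mul, Matrix.transpose_apply, Matrix.of_apply,
      Finset.sum_apply, Pi.smul_apply, smul_eq_mul]
    exact Finset.sum_congr rfl fun i _ => by ring
  rw [hM]
  have h1 : (Matrix.of (fun a => ∑ i : Fin m, (d i * A i a) • (fun b : Fin k => A i b))).det
      = (Matrix.detRowAlternating (R := ℝ) (n := Fin k)).toMultilinearMap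
          (fun a => ∑ i : Fin m, (d i * A i a) • (fun b : Fin k => A i b)) := rfl
  rw [h1, MultilinearMap.map_sum]
  refine Finset.sum_congr rfl fun r _ => ?_
  rw [MultilinearMap.map_smul_univ]
  rfl

noncomputable def mdet {m k : ℕ} (A : Matrix (Fin m) (Fin k) ℝ) (S : Finset (Fin m)) : ℝ :=
  if h : S.card = k then (A.submatrix (fun a => S.orderEmbOfFin h a) id).det else 0

lemma cauchy_binet_diag {m k : ℕ} (A : Matrix (Fin m) (Fin k) ℝ) (d : Fin m → ℝ) :
    (Aᵀ * Matrix.diagonal d * A).det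
      = ∑ S ∈ Finset.powersetCard k (Finset.univ : Finset (Fin m)),
          (∏ i ∈ S, d i) * (mdet A S) ^ 2 := by
  rw [det_eq_sum_funcs]
  set F : (Fin k → Fin m) → ℝ :=
    fun r => (∏ a, (d (r a) * A (r a) a)) * (A.submatrix r id).det with hF
  have hzero : ∀ r : Fin k → Fin m, ¬ Function.Injective r → F r = 0 := by
    intro r hr
    rw [Function.not_injective_iff] at hr
    obtain ⟨a, b, hab, hne⟩ := hr
    have : (A.submatrix r id).det = 0 :=
      Matrix.det_zero_of_row_eq hne (by ext c; simp [Matrix.submatrix_apply, hab])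
    simp [hF, this]
  have hstep1 : ∑ r : Fin k → Fin m, F r
      = ∑ r ∈ Finset.univ.filter (fun r => Function.Injective r), F r := by
    symm
    apply Finset.sum_filter_of_ne
    intro r _ hne
    by_contra hni
    exact hne (hzero r hni)
  rw [hstep1]
  rw [← Finset.sum_fiberwise_of_maps_to (g := fun r => Finset.image r Finset.univ)
    (t := Finset.powersetCard k (Finset.univ : Finset (Fin m)))
    (fun r hr => by
      rw [Finset.mem_powersetCard]
      refine ⟨Finset.subset_univ _, ?_⟩
      rw [Finset.card_image_of_injective _ (Finset.mem_filter.mp hr).2, Finset.card_univ,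
        Fintype.card_fin]) F]
  refine Finset.sum_congr rfl fun S hS => ?_
  obtain ⟨-, hSk⟩ := Finset.mem_powersetCard.mp hS
  set E := S.orderEmbOfFin hSk with hE
  have himgE : Finset.image (fun a => E a) Finset.univ = S := by
    apply Finset.eq_of_subset_of_card_le
    · intro x hx
      obtain ⟨a, -, rfl⟩ := Finset.mem_image.mp hx
      exact Finset.orderEmbOfFin_mem S hSk a
    · rw [Finset.card_image_of_injective _ E.injective, Finset.card_univ, Fintype.card_fin, hSk]
  have hbij : ∑ σ : Equiv.Perm (Fin k), F (fun a => E (σ a))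
      = ∑ r ∈ (Finset.univ.filter (fun r => Function.Injective r)).filter
          (fun r => Finset.image r Finset.univ = S), F r := by
    refine Finset.sum_bij (fun σ _ => fun a => E (σ a)) ?_ ?_ ?_ ?_
    · intro σ _
      refine Finset.mem_filter.mpr ⟨Finset.mem_filter.mpr ⟨Finset.mem_univ _, ?_⟩, ?_⟩
      · exact E.injective.comp σ.injective
      · rw [show Finset.image (fun a => E (σ a)) Finset.univ
            = Finset.image (fun a => E a) (Finset.image σ Finset.univ) by
            rw [Finset.image_image]; rfl]
        rw [Finset.image_univ_equiv]
        exact himgE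
    · intro σ _ τ _ h
      exact Equiv.ext fun a => E.injective (congrFun h a)
    · intro r hr
      obtain ⟨hr1, hr2⟩ := Finset.mem_filter.mp hr
      have hrinj : Function.Injective r := (Finset.mem_filter.mp hr1).2
      have hmem : ∀ a, r a ∈ S := by
        intro a; rw [← hr2]; exact Finset.mem_image_of_mem r (Finset.mem_univ a)
      set v : Fin k → Fin k := fun a => (S.orderIsoOfFin hSk).symm ⟨r a, hmem a⟩ with hv
      have hvinj : Function.Injective v := by
        intro a b h
        exact hrinj (Subtype.mk_eq_mk.mp ((S.orderIsoOfFin hSk).symm.injective h))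
      obtain ⟨σ, hσ⟩ : ∃ σ : Equiv.Perm (Fin k), ⇑σ = v :=
        ⟨Equiv.ofBijective v ((Finite.injective_iff_bijective).mp hvinj), rfl⟩
      refine ⟨σ, Finset.mem_univ _, ?_⟩
      funext a
      show E (σ a) = r a
      rw [hσ]
      show E ((S.orderIsoOfFin hSk).symm ⟨r a, hmem a⟩) = r a
      rw [← Finset.coe_orderIsoOfFin_apply, OrderIso.apply_symm_apply]
    · intro σ _; rfl
  rw [← hbij]
  have hterm : ∀ σ : Equiv.Perm (Fin k), F (fun a => E (σ a))
      = ((∏ i ∈ S, d i) * (A.submatrix (fun a => E a) id).det) *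
          ((Equiv.Perm.sign σ : ℤ) * ∏ a, (A.submatrix (fun a => E a) id) (σ a) a) := by
    intro σ
    have h1 : A.submatrix (fun a => E (σ a)) id
        = (A.submatrix (fun a => E a) id).submatrix (⇑σ) id := by
      rw [Matrix.submatrix_submatrix]; rfl
    have h2 : (∏ a, (d (E (σ a)) * A (E (σ a)) a))
        = (∏ a, d (E (σ a))) * ∏ a, A (E (σ a)) a := Finset.prod_mul_distrib
    have h3 : (∏ a, d (E (σ a))) = ∏ i ∈ S, d i := by
      rw [Equiv.prod_comp σ (fun a => d (E a)), ← himgE,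
        Finset.prod_image (fun a _ b _ h => E.injective h)]
    simp only [hF, h1, Matrix.det_permute, h2, h3, Matrix.submatrix_apply, id_eq]
    ring
  rw [Finset.sum_congr rfl (fun σ _ => hterm σ), ← Finset.mul_sum, ← Matrix.det_apply']
  have hmd : mdet A S = (A.submatrix (fun a => E a) id).det := by
    rw [mdet, dif_pos hSk]
  rw [hmd]
  ring

/-- entries of an orthogonal matrix are bounded by 1 -/
lemma og_entry_le {m : ℕ} (g : Matrix.orthogonalGroup (Fin m) ℝ) (i j : Fin m) :
    |(g : Matrix (Fin m) (Fin m) ℝ) i j| ≤ 1 := by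
  have h1 : star (g : Matrix (Fin m) (Fin m) ℝ) * g = 1 := (Unitary.mem_iff.mp g.2).1
  have h2 : ∑ l, (g : Matrix (Fin m) (Fin m) ℝ) l j * (g : Matrix (Fin m) (Fin m) ℝ) l j
      = 1 := by
    have := congrFun (congrFun h1 j) j
    rw [Matrix.mul_apply] at this
    simp only [Matrix.star_apply, star_trivial, Matrix.one_apply_eq] at this
    rw [← this]
  rw [abs_le_one_iff_mul_self_le_one, ← h2]
  exact Finset.single_le_sum
    (f := fun l => (g : Matrix (Fin m) (Fin m) ℝ) l j * (g : Matrix (Fin m) (Fin m) ℝ) l j)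
    (fun l _ => mul_self_nonneg _) (Finset.mem_univ i)

lemma det_abs_le_of_entries {k : ℕ} (M : Matrix (Fin k) (Fin k) ℝ)
    (hM : ∀ i j, |M i j| ≤ 1) : |M.det| ≤ (k.factorial : ℝ) := by
  rw [Matrix.det_apply']
  calc |∑ σ : Equiv.Perm (Fin k), ((Equiv.Perm.sign σ : ℤ) : ℝ) * ∏ i, M (σ i) i|
      ≤ ∑ σ : Equiv.Perm (Fin k), |((Equiv.Perm.sign σ : ℤ) : ℝ) * ∏ i, M (σ i) i| :=
        Finset.abs_sum_le_sum_abs _ _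
    _ ≤ ∑ _σ : Equiv.Perm (Fin k), (1 : ℝ) := by
        refine Finset.sum_le_sum fun σ _ => ?_
        rw [abs_mul]
        have hs : |((Equiv.Perm.sign σ : ℤ) : ℝ)| = 1 := by
          rcases Int.units_eq_one_or (Equiv.Perm.sign σ) with h | h <;> simp [h]
        rw [hs, one_mul, Finset.abs_prod]
        calc (∏ i, |M (σ i) i|) ≤ ∏ _i : Fin k, (1:ℝ) :=
              Finset.prod_le_prod (fun i _ => abs_nonneg _) (fun i _ => hM _ _)
          _ = 1 := by simp
    _ = (k.factorial : ℝ) := by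
        rw [Finset.sum_const, Finset.card_univ, Fintype.card_perm, Fintype.card_fin,
          nsmul_eq_mul, mul_one]

/-- integrability of continuous bounded functions on the orthogonal group -/
lemma integrable_of_cont_bdd {m : ℕ} (μ : Measure (Matrix.orthogonalGroup (Fin m) ℝ))
    [IsProbabilityMeasure μ] {F : Matrix.orthogonalGroup (Fin m) ℝ → ℝ}
    (hF : Continuous F) (C : ℝ) (hb : ∀ g, |F g| ≤ C) : Integrable F μ :=
  (MeasureTheory.integrable_const C).mono' hF.measurable.aestronglyMeasurable
    (Filter.Eventually.of_forall (by simpa [Real.norm_eq_abs] using hb))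

/-- permutation matrices are orthogonal -/
noncomputable def permOG (m : ℕ) (π : Equiv.Perm (Fin m)) :
    Matrix.orthogonalGroup (Fin m) ℝ :=
  ⟨π.toPEquiv.toMatrix, by
    rw [Matrix.mem_orthogonalGroup_iff]
    have h1 : star (π.toPEquiv.toMatrix : Matrix (Fin m) (Fin m) ℝ)
        = (π.toPEquiv.toMatrix : Matrix (Fin m) (Fin m) ℝ)ᵀ := by
      ext i j; simp [Matrix.star_apply]
    rw [← PEquiv.toMatrix_symm, ← Equiv.toPEquiv_symm, ← PEquiv.toMatrix_trans,
      ← Equiv.toPEquiv_trans, Equiv.self_trans_symm, Equiv.toPEquiv_refl,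
      PEquiv.toMatrix_refl]⟩

lemma integral_comp_left {m : ℕ} (μ : Measure (Matrix.orthogonalGroup (Fin m) ℝ))
    [IsProbabilityMeasure μ]
    (hleft : ∀ h : Matrix.orthogonalGroup (Fin m) ℝ, Measure.map (h * ·) μ = μ)
    {F : Matrix.orthogonalGroup (Fin m) ℝ → ℝ} (hF : Continuous F)
    (h : Matrix.orthogonalGroup (Fin m) ℝ) :
    ∫ g, F (h * g) ∂μ = ∫ g, F g ∂μ := by
  have hc : Continuous (fun g : Matrix.orthogonalGroup (Fin m) ℝ => h * g) := by
    refine Continuous.subtype_mk ?_ _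
    exact continuous_const.matrix_mul continuous_subtype_val
  conv_rhs => rw [← hleft h]
  rw [MeasureTheory.integral_map hc.measurable.aemeasurable]
  rw [hleft h]
  exact hF.measurable.aestronglyMeasurable

noncomputable def Fdet {m k : ℕ} (e c : Fin k → Fin m)
    (g : Matrix.orthogonalGroup (Fin m) ℝ) : ℝ :=
  ((g : Matrix (Fin m) (Fin m) ℝ).submatrix e c).det

lemma Fdet_cont {m k : ℕ} (e c : Fin k → Fin m) : Continuous (Fdet e c) :=
  (continuous_subtype_val.matrix_submatrix e c).matrix_det

lemma Fdet_bound {m k : ℕ} (e c : Fin k → Fin m) (g : Matrix.orthogonalGroup (Fin m) ℝ) :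
    |Fdet e c g| ≤ (k.factorial : ℝ) :=
  det_abs_le_of_entries _ (fun i j => og_entry_le g _ _)

lemma submatrix_tri {m k : ℕ} (X : Matrix (Fin m) (Fin m) ℝ) (d : Fin m → ℝ)
    (c : Fin k → Fin m) :
    (Xᵀ * Matrix.diagonal d * X).submatrix c c
      = (X.submatrix id c)ᵀ * Matrix.diagonal d * (X.submatrix id c) := by
  rw [Matrix.mul_assoc, Matrix.mul_assoc]
  ext a b
  rw [Matrix.submatrix_apply, Matrix.mul_apply, Matrix.mul_apply]
  simp [Matrix.diagonal_mul, Matrix.submatrix_apply]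

/-- Averaging over `O(n-1)` with the (bi-invariant) Haar probability measure `μ`,
the expected leading principal `k × k` minor of `gᵀ D g`, where `D = diag d` is the
matrix of a positive definite symmetric bilinear form on `ℝ^{n-1}` in an eigenbasis,
equals `(binom (n-1) k)⁻¹ · sₖ(d₁,…,d_{n-1})`. -/
theorem stmt_4 (n k : ℕ) (hn : 1 ≤ n) (hk : k ≤ n - 1)
    (d : Fin (n - 1) → ℝ) (hd : ∀ i, 0 < d i)
    (μ : Measure (Matrix.orthogonalGroup (Fin (n - 1)) ℝ))
    [IsProbabilityMeasure μ]
    (hright : ∀ h : Matrix.orthogonalGroup (Fin (n - 1)) ℝ,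
      Measure.map (· * h) μ = μ)
    (hleft : ∀ h : Matrix.orthogonalGroup (Fin (n - 1)) ℝ,
      Measure.map (h * ·) μ = μ) :
    ∫ g : Matrix.orthogonalGroup (Fin (n - 1)) ℝ,
        (((g : Matrix (Fin (n - 1)) (Fin (n - 1)) ℝ)ᵀ * Matrix.diagonal d * g).submatrix
          (Fin.castLE hk) (Fin.castLE hk)).det ∂μ
      = (((n - 1).choose k : ℝ))⁻¹ *
          ∑ I ∈ Finset.powersetCard k (Finset.univ : Finset (Fin (n - 1))),
            ∏ i ∈ I, d i := by
  classical
  set ck : Fin k → Fin (n - 1) := Fin.castLE hk with hck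
  set P := Finset.powersetCard k (Finset.univ : Finset (Fin (n - 1))) with hP
  set A : Matrix.orthogonalGroup (Fin (n - 1)) ℝ → Matrix (Fin (n - 1)) (Fin k) ℝ :=
    fun g => (g : Matrix (Fin (n - 1)) (Fin (n - 1)) ℝ).submatrix id ck with hA
  -- pointwise Cauchy–Binet
  have hpt : ∀ g : Matrix.orthogonalGroup (Fin (n - 1)) ℝ,
      (((g : Matrix (Fin (n - 1)) (Fin (n - 1)) ℝ)ᵀ * Matrix.diagonal d * g).submatrix ck ck).det
        = ∑ S ∈ P, (∏ i ∈ S, d i) * (mdet (A g) S) ^ 2 := by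
    intro g
    rw [submatrix_tri, cauchy_binet_diag]
  -- mdet in terms of Fdet
  have hmdet : ∀ (S : Finset (Fin (n - 1))) (hSk : S.card = k)
      (g : Matrix.orthogonalGroup (Fin (n - 1)) ℝ),
      mdet (A g) S = Fdet (fun a => S.orderEmbOfFin hSk a) ck g := by
    intro S hSk g
    rw [mdet, dif_pos hSk, Fdet, hA, Matrix.submatrix_submatrix]
    rfl
  -- the "first k" set
  set ckEmb : Fin k ↪o Fin (n - 1) :=
    OrderEmbedding.ofStrictMono ck (Fin.strictMono_castLE hk) with hckEmb
  set T : Finset (Fin (n - 1)) := Finset.map ckEmb.toEmbedding Finset.univ with hT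
  have hTk : T.card = k := by
    rw [hT, Finset.card_map, Finset.card_univ, Fintype.card_fin]
  have hTE : ∀ a : Fin k, T.orderEmbOfFin hTk a = ck a := by
    have : ckEmb = T.orderEmbOfFin hTk := by
      apply Finset.orderEmbOfFin_unique'
      intro x
      rw [hT, Finset.mem_map]
      exact ⟨x, Finset.mem_univ x, rfl⟩
    intro a
    rw [← this]
    rfl
  -- invariance
  have hinv : ∀ (S : Finset (Fin (n - 1))) (hSk : S.card = k),
      ∫ g, (Fdet (fun a => S.orderEmbOfFin hSk a) ck g) ^ 2 ∂μ
        = ∫ g, (Fdet ck ck g) ^ 2 ∂μ := by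
    intro S hSk
    set e : {x // x ∈ T} ≃ {x // x ∈ S} :=
      (T.orderIsoOfFin hTk).toEquiv.symm.trans (S.orderIsoOfFin hSk).toEquiv with he
    set π := Equiv.extendSubtype e with hπdef
    have hπ : ∀ a : Fin k, π (ck a) = S.orderEmbOfFin hSk a := by
      intro a
      have hmemT : ck a ∈ T := by
        rw [hT, Finset.mem_map]
        exact ⟨a, Finset.mem_univ a, rfl⟩
      rw [hπdef, Equiv.extendSubtype_apply_of_mem e _ hmemT]
      have h0 : (T.orderIsoOfFin hTk).toEquiv.symm ⟨ck a, hmemT⟩ = a := by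
        rw [Equiv.symm_apply_eq]
        exact Subtype.ext ((Finset.coe_orderIsoOfFin_apply T hTk a).trans (hTE a)).symm
      rw [he]
      show ((S.orderIsoOfFin hSk) ((T.orderIsoOfFin hTk).toEquiv.symm ⟨ck a, hmemT⟩) : Fin (n-1)) = _
      rw [h0]
      exact Finset.coe_orderIsoOfFin_apply S hSk a
    have hpt2 : ∀ g, Fdet (fun a => S.orderEmbOfFin hSk a) ck g
        = Fdet ck ck (permOG (n - 1) π * g) := by
      intro g
      rw [Fdet, Fdet]
      have hco : ((permOG (n - 1) π * g : Matrix.orthogonalGroup (Fin (n - 1)) ℝ)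
          : Matrix (Fin (n - 1)) (Fin (n - 1)) ℝ)
          = (g : Matrix (Fin (n - 1)) (Fin (n - 1)) ℝ).submatrix π id :=
        PEquiv.toMatrix_toPEquiv_mul π _
      rw [hco, Matrix.submatrix_submatrix, Function.id_comp,
        show ⇑π ∘ ck = (fun a => S.orderEmbOfFin hSk a) from funext hπ]
    simp_rw [hpt2]
    exact integral_comp_left μ hleft ((Fdet_cont ck ck).pow 2) (permOG (n - 1) π)
  -- sum of squared minors is 1
  have hone : ∀ g : Matrix.orthogonalGroup (Fin (n - 1)) ℝ,
      ∑ S ∈ P, (mdet (A g) S) ^ 2 = 1 := by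
    intro g
    have hcb := cauchy_binet_diag (A g) (fun _ => (1 : ℝ))
    simp only [Finset.prod_const_one, one_mul] at hcb
    rw [hP, ← hcb, hA, ← submatrix_tri]
    have hgg : (g : Matrix (Fin (n - 1)) (Fin (n - 1)) ℝ)ᵀ *
        Matrix.diagonal (fun _ => (1 : ℝ)) * (g : Matrix (Fin (n - 1)) (Fin (n - 1)) ℝ)
        = 1 := by
      rw [show Matrix.diagonal (fun _ => (1:ℝ)) = (1 : Matrix (Fin (n-1)) (Fin (n-1)) ℝ) from
        Matrix.diagonal_one, Matrix.mul_one]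
      have h1 : star (g : Matrix (Fin (n - 1)) (Fin (n - 1)) ℝ) * g = 1 :=
        (Unitary.mem_iff.mp g.2).1
      rw [← h1]
      congr 1
    rw [hgg]
    have hid : (1 : Matrix (Fin (n-1)) (Fin (n-1)) ℝ).submatrix ck ck = 1 := by
      ext a b
      simp only [Matrix.submatrix_apply, Matrix.one_apply, hck, Fin.castLE_inj]
    rw [hid, Matrix.det_one]
  -- integrability
  have hint : ∀ (S : Finset (Fin (n - 1))) (hSk : S.card = k),
      Integrable (fun g => (mdet (A g) S) ^ 2) μ := by
    intro S hSk
    have hfeq : (fun g => (mdet (A g) S) ^ 2)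
        = fun g => (Fdet (fun a => S.orderEmbOfFin hSk a) ck g) ^ 2 := by
      funext g; rw [hmdet S hSk g]
    rw [hfeq]
    refine integrable_of_cont_bdd μ ((Fdet_cont _ _).pow 2) ((k.factorial : ℝ) ^ 2) ?_
    intro g
    rw [abs_pow]
    exact pow_le_pow_left₀ (abs_nonneg _) (Fdet_bound _ _ g) 2
  have hSk_of_mem : ∀ S ∈ P, S.card = k := fun S hS =>
    (Finset.mem_powersetCard.mp hS).2
  -- main computation
  set c := ∫ g, (Fdet ck ck g) ^ 2 ∂μ with hc
  have step1 : ∫ g : Matrix.orthogonalGroup (Fin (n - 1)) ℝ,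
      (((g : Matrix (Fin (n - 1)) (Fin (n - 1)) ℝ)ᵀ * Matrix.diagonal d * g).submatrix ck ck).det ∂μ
      = ∑ S ∈ P, (∏ i ∈ S, d i) * c := by
    rw [MeasureTheory.integral_congr_ae (Filter.Eventually.of_forall hpt)]
    rw [MeasureTheory.integral_finset_sum P
      (fun S hS => ((hint S (hSk_of_mem S hS)).const_mul _))]
    refine Finset.sum_congr rfl fun S hS => ?_
    rw [MeasureTheory.integral_const_mul]
    congr 1
    have hfeq : (fun g => (mdet (A g) S) ^ 2)
        = fun g => (Fdet (fun a => S.orderEmbOfFin (hSk_of_mem S hS) a) ck g) ^ 2 := by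
      funext g; rw [hmdet S (hSk_of_mem S hS) g]
    rw [hfeq, hinv S (hSk_of_mem S hS)]
  have step2 : (P.card : ℝ) * c = 1 := by
    have h2 : ∑ S ∈ P, ∫ g, (mdet (A g) S) ^ 2 ∂μ = 1 := by
      rw [← MeasureTheory.integral_finset_sum P (fun S hS => hint S (hSk_of_mem S hS))]
      rw [MeasureTheory.integral_congr_ae (Filter.Eventually.of_forall hone)]
      simp
    rw [← h2]
    rw [Finset.sum_congr rfl (fun S hS => by
      have hfeq : (fun g => (mdet (A g) S) ^ 2)
          = fun g => (Fdet (fun a => S.orderEmbOfFin (hSk_of_mem S hS) a) ck g) ^ 2 := by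
        funext g; rw [hmdet S (hSk_of_mem S hS) g]
      rw [hfeq, hinv S (hSk_of_mem S hS)])]
    rw [Finset.sum_const, nsmul_eq_mul]
  have hcard : (P.card : ℝ) = ((n - 1).choose k : ℝ) := by
    rw [hP, Finset.card_powersetCard, Finset.card_univ, Fintype.card_fin]
  have hchoose : ((n - 1).choose k : ℝ) ≠ 0 := by
    exact_mod_cast (Nat.choose_pos hk).ne'
  have hcval : c = (((n - 1).choose k : ℝ))⁻¹ := by
    rw [hcard] at step2
    field_simp at step2 ⊢
    linarith [step2]
  rw [step1, hcval, ← Finset.sum_mul, mul_comm]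
end
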